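/- Let l be an even positive integer with l ≥ 4. Then the number of orbits of size exactly l of the shift map on 2-element subsets of ZMod l equals l/2 − 1, and there is exactly one orbit of size l/2 (namely the orbit of {0, l/2}). -/

import Mathlib

/-- The shift map on finsets of `ZMod m`. -/
def sh (m : ℕ) (A : Finset (ZMod m)) : Finset (ZMod m) := A.image (· + 1)

/-- The orbit of a finset `A` of `ZMod m` under the shift map (note `(sh m)^[m] = id`). -/
def shOrbit (m : ℕ) [NeZero m] (A : Finset (ZMod m)) : Finset (Finset (ZMod m)) :=
  (Finset.range m).image (fun i => (sh m)^[i] A)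

/-- The number of orbits of size exactly `k` of the shift map on `d`-element subsets
of `ZMod m`. -/
def norb (m d k : ℕ) [NeZero m] : ℕ :=
  (((Finset.univ.filter (fun A : Finset (ZMod m) => A.card = d)).image
      (shOrbit m)).filter (fun O => O.card = k)).card

lemma pair_eq_pair_iff' {α : Type*} [DecidableEq α] {a b c d : α} :
    ({a,b}:Finset α) = {c,d} ↔ (a=c∧b=d)∨(a=d∧b=c) := by
  rw [← Finset.coe_inj]; push_cast; exact Set.pair_eq_pair_iff

lemma sh_iterate (m : ℕ) (A : Finset (ZMod m)) (i : ℕ) :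
    (sh m)^[i] A = A.image (· + (i : ZMod m)) := by
  induction i with
  | zero => simp
  | succ n ih =>
      rw [Function.iterate_succ_apply', ih, sh, Finset.image_image]
      congr 1; funext x; simp [add_assoc]

lemma shOrbit_eq (m : ℕ) [NeZero m] (A : Finset (ZMod m)) :
    shOrbit m A = Finset.univ.image (fun z : ZMod m => A.image (· + z)) := by
  unfold shOrbit
  ext B
  simp only [Finset.mem_image, Finset.mem_range, Finset.mem_univ, true_and]
  constructor
  · rintro ⟨i, hi, rfl⟩; exact ⟨i, (sh_iterate m A i).symm⟩
  · rintro ⟨z, rfl⟩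
    exact ⟨z.val, z.val_lt, by rw [sh_iterate, ZMod.natCast_rightInverse z]⟩

lemma image_add_add {m : ℕ} (A : Finset (ZMod m)) (z w : ZMod m) :
    (A.image (· + z)).image (· + w) = A.image (· + (z + w)) := by
  rw [Finset.image_image]; congr 1; funext x; simp [add_assoc]

lemma shOrbit_image (m : ℕ) [NeZero m] (A : Finset (ZMod m)) (z : ZMod m) :
    shOrbit m (A.image (· + z)) = shOrbit m A := by
  rw [shOrbit_eq, shOrbit_eq]
  ext B
  simp only [Finset.mem_image, Finset.mem_univ, true_and]
  constructor
  · rintro ⟨w, rfl⟩; exact ⟨z + w, (image_add_add A z w).symm⟩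
  · rintro ⟨w, rfl⟩
    refine ⟨w - z, ?_⟩
    rw [image_add_add]; congr 1; ring_nf; funext x; ring

lemma image_pair {m : ℕ} (a b z : ZMod m) :
    ({a, b} : Finset (ZMod m)).image (· + z) = {a + z, b + z} := by
  simp [Finset.image_insert]

lemma mem_shOrbit_self (m : ℕ) [NeZero m] (A : Finset (ZMod m)) : A ∈ shOrbit m A := by
  rw [shOrbit_eq]
  exact Finset.mem_image.mpr ⟨0, Finset.mem_univ _, by simp⟩

lemma mem_shOrbit_pair {m : ℕ} [NeZero m] {d : ZMod m} {B : Finset (ZMod m)} :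
    B ∈ shOrbit m {0, d} ↔ ∃ w, B = {w, d + w} := by
  rw [shOrbit_eq]
  simp only [Finset.mem_image, Finset.mem_univ, true_and, image_pair, zero_add]
  constructor
  · rintro ⟨w, rfl⟩; exact ⟨w, rfl⟩
  · rintro ⟨w, rfl⟩; exact ⟨w, rfl⟩

lemma card_shOrbit_big {m : ℕ} [NeZero m] {d : ZMod m} (hd : d + d ≠ 0) :
    (shOrbit m {0, d}).card = m := by
  rw [shOrbit_eq, Finset.card_image_of_injective _ ?_, Finset.card_univ, ZMod.card]
  intro w w' hww'
  simp only [image_pair, zero_add] at hww'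
  rcases pair_eq_pair_iff'.mp hww' with ⟨h1, _⟩ | ⟨h1, h2⟩
  · exact h1
  · exact absurd (by linear_combination h2 - h1) hd

lemma cast_inj_of_lt {m i j : ℕ} (hi : i < m) (hj : j < m)
    (h : (i : ZMod m) = (j : ZMod m)) : i = j := by
  have : NeZero m := ⟨by omega⟩
  rw [← ZMod.val_cast_of_lt hi, ← ZMod.val_cast_of_lt hj, h]


lemma shOrbit_pair_sub {l : ℕ} [NeZero l] (a b : ZMod l) :
    shOrbit l {a, b} = shOrbit l {0, b - a} := by
  have : ({0, b - a} : Finset (ZMod l)).image (· + a) = {a, b} := by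
    rw [image_pair, zero_add, sub_add_cancel]
  rw [← this, shOrbit_image]

lemma shOrbit_neg {l : ℕ} [NeZero l] (d : ZMod l) :
    shOrbit l {0, -d} = shOrbit l {0, d} := by
  have : ({0, d} : Finset (ZMod l)).image (· + (-d)) = {0, -d} := by
    rw [image_pair, zero_add, add_neg_cancel, Finset.pair_comm]
  rw [← this, shOrbit_image]

lemma orbit_eq_imp {l : ℕ} [NeZero l] {d e : ZMod l}
    (hde : shOrbit l {0, d} = shOrbit l {0, e}) : e = d ∨ e = -d := by
  have : ({0, e} : Finset (ZMod l)) ∈ shOrbit l {0, d} := by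
    rw [hde]; exact mem_shOrbit_self l _
  obtain ⟨w, hw⟩ := mem_shOrbit_pair.mp this
  rcases pair_eq_pair_iff'.mp hw with ⟨h1, h2⟩ | ⟨h1, h2⟩
  · left; rw [h2, ← h1, add_zero]
  · right; rw [h2]; exact eq_neg_of_add_eq_zero_right h1.symm

lemma card_shOrbit_half {l : ℕ} [NeZero l] (hl : 4 ≤ l) (heven : Even l) :
    (shOrbit l {0, ((l / 2 : ℕ) : ZMod l)}).card = l / 2 := by
  have h2dvd : 2 ∣ l := heven.two_dvd
  set h := l / 2 with hh
  have hlh : h + h = l := by omega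
  set c : ZMod l := ((h : ℕ) : ZMod l) with hc
  have hcc : c + c = 0 := by rw [hc, ← Nat.cast_add, hlh, ZMod.natCast_self]
  have hS : shOrbit l {0, c}
      = (Finset.range h).image
        (fun i : ℕ => ({(Nat.cast i : ZMod l), c + Nat.cast i} : Finset (ZMod l))) := by
    ext B
    rw [mem_shOrbit_pair]
    simp only [Finset.mem_image, Finset.mem_range]
    constructor
    · rintro ⟨w, rfl⟩
      have hwl : w.val < l := w.val_lt
      by_cases hv : w.val < h
      · exact ⟨w.val, hv, by rw [ZMod.natCast_rightInverse w]⟩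
      · refine ⟨w.val - h, by omega, ?_⟩
        set u : ZMod l := ((w.val - h : ℕ) : ZMod l) with hu
        have hcw : c + u = w := by
          rw [hu, hc, ← Nat.cast_add]
          have heq : h + (w.val - h) = w.val := by omega
          rw [heq, ZMod.natCast_rightInverse w]
        have hw2 : c + w = u := by rw [← hcw, ← add_assoc, hcc, zero_add]
        calc ({u, c + u} : Finset (ZMod l)) = {u, w} := by rw [hcw]
          _ = {w, u} := Finset.pair_comm _ _
          _ = {w, c + w} := by rw [hw2]
    · rintro ⟨i, hi, rfl⟩
      exact ⟨(i : ZMod l), rfl⟩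
  rw [hS, Finset.card_image_of_injOn, Finset.card_range]
  intro i hi j hj hij
  simp only [Finset.mem_coe, Finset.mem_range] at hi hj
  rcases pair_eq_pair_iff'.mp hij with ⟨h1, _⟩ | ⟨h1, _⟩
  · exact cast_inj_of_lt (by omega) (by omega) h1
  · exfalso
    rw [hc, ← Nat.cast_add] at h1
    have := cast_inj_of_lt (show i < l by omega) (show h + j < l by omega) h1
    omega

/-- For even `l ≥ 4`, there are `l/2 − 1` orbits of size exactly `l` on 2-element
subsets of `ZMod l`, and exactly one orbit of size `l/2`, namely that of `{0, l/2}`. -/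
theorem norb_two_even (l : ℕ) [NeZero l] (hl : 4 ≤ l) (heven : Even l) :
    norb l 2 l = l / 2 - 1 ∧ norb l 2 (l / 2) = 1 ∧
    Function.minimalPeriod (sh l) ({0, ((l / 2 : ℕ) : ZMod l)} : Finset (ZMod l))
      = l / 2 := by
  have h2dvd : 2 ∣ l := heven.two_dvd
  set h := l / 2 with hh
  have hlh : h + h = l := by omega
  have hh2 : 2 ≤ h := by omega
  have hhl : h < l := by omega
  set c : ZMod l := ((h : ℕ) : ZMod l) with hc
  have hcc : c + c = 0 := by rw [hc, ← Nat.cast_add, hlh, ZMod.natCast_self]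
  have cast_zero : ∀ i : ℕ, i < l → ((i : ZMod l) = 0 ↔ i = 0) := by
    intro i hi
    constructor
    · intro h0
      have hv := ZMod.val_cast_of_lt hi
      rw [h0, ZMod.val_zero] at hv; omega
    · rintro rfl; simp
  have hc0 : c ≠ 0 := by
    rw [hc]; intro h0; have := (cast_zero h hhl).mp h0; omega
  -- classification of orbits
  have orbit_form : ∀ O ∈ (Finset.univ.filter
      (fun A : Finset (ZMod l) => A.card = 2)).image (shOrbit l),
      ∃ d : ZMod l, d ≠ 0 ∧ O = shOrbit l {0, d} := by
    intro O hO
    simp only [Finset.mem_image, Finset.mem_filter, Finset.mem_univ, true_and] at hO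
    obtain ⟨A, hA2, rfl⟩ := hO
    obtain ⟨a, b, hab, rfl⟩ := Finset.card_eq_two.mp hA2
    exact ⟨b - a, sub_ne_zero.mpr (Ne.symm hab), shOrbit_pair_sub a b⟩
  have mem_img : ∀ d : ZMod l, d ≠ 0 → shOrbit l {0, d} ∈ (Finset.univ.filter
      (fun A : Finset (ZMod l) => A.card = 2)).image (shOrbit l) := by
    intro d hd
    exact Finset.mem_image.mpr ⟨{0, d},
      Finset.mem_filter.mpr ⟨Finset.mem_univ _, Finset.card_pair (Ne.symm hd)⟩, rfl⟩
  have two_torsion : ∀ d : ZMod l, d ≠ 0 → d + d = 0 → d = c := by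
    intro d hd0 hdd
    have hvl := ZMod.val_lt d
    have hv0 : d.val ≠ 0 := by
      intro h0
      apply hd0
      rw [← ZMod.natCast_rightInverse d, h0, Nat.cast_zero]
    have hz : ((d.val + d.val : ℕ) : ZMod l) = 0 := by
      rw [Nat.cast_add, ZMod.natCast_rightInverse d]; exact hdd
    have hdvd := (ZMod.natCast_eq_zero_iff _ _).mp hz
    obtain ⟨k, hk⟩ := hdvd
    have : d.val = h := by
      rcases Nat.lt_or_ge k 2 with hk2 | hk2
      · interval_cases k <;> omega
      · nlinarith [hvl]
    rw [← ZMod.natCast_rightInverse d, this, hc]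
  have hhalf := card_shOrbit_half hl heven
  rw [← hh] at hhalf
  rw [← hc] at hhalf
  -- the big-orbit count
  set D : Finset (ZMod l) := (Finset.Ico 1 h).image (Nat.cast : ℕ → ZMod l) with hD
  have hbig : ((Finset.univ.filter
      (fun A : Finset (ZMod l) => A.card = 2)).image (shOrbit l)).filter
        (fun O => O.card = l) = D.image (fun d => shOrbit l {0, d}) := by
    apply Finset.Subset.antisymm
    · intro O hO
      rw [Finset.mem_filter] at hO
      obtain ⟨hOm, hOc⟩ := hO
      obtain ⟨d, hd0, rfl⟩ := orbit_form O hOm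
      have hvl := ZMod.val_lt d
      have hv0 : d.val ≠ 0 := by
        intro h0; apply hd0
        rw [← ZMod.natCast_rightInverse d, h0, Nat.cast_zero]
      rcases lt_trichotomy d.val h with hlt | heq | hgt
      · exact Finset.mem_image.mpr ⟨d, Finset.mem_image.mpr ⟨d.val,
          Finset.mem_Ico.mpr ⟨by omega, hlt⟩, ZMod.natCast_rightInverse d⟩, rfl⟩
      · exfalso
        have hdc : d = c := by rw [← ZMod.natCast_rightInverse d, heq, hc]
        rw [hdc, hhalf] at hOc
        omega
      · refine Finset.mem_image.mpr ⟨-d, Finset.mem_image.mpr ⟨l - d.val,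
          Finset.mem_Ico.mpr ⟨by omega, by omega⟩, ?_⟩, shOrbit_neg d⟩
        rw [Nat.cast_sub (le_of_lt hvl), ZMod.natCast_self,
          ZMod.natCast_rightInverse d, zero_sub]
    · intro O hO
      obtain ⟨d, hdD, rfl⟩ := Finset.mem_image.mp hO
      obtain ⟨i, hi, rfl⟩ := Finset.mem_image.mp hdD
      rw [Finset.mem_Ico] at hi
      have hd0 : (i : ZMod l) ≠ 0 := by
        intro h0; have := (cast_zero i (by omega)).mp h0; omega
      have hdd : (i : ZMod l) + (i : ZMod l) ≠ 0 := by
        rw [← Nat.cast_add]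
        intro h0; have := (cast_zero (i + i) (by omega)).mp h0; omega
      exact Finset.mem_filter.mpr ⟨mem_img _ hd0, card_shOrbit_big hdd⟩
  have hDcard : D.card = h - 1 := by
    rw [hD, Finset.card_image_of_injOn, Nat.card_Ico]
    intro i hi j hj hij
    simp only [Finset.coe_Ico, Set.mem_Ico] at hi hj
    exact cast_inj_of_lt (by omega) (by omega) hij
  have hDinj : Set.InjOn (fun d => shOrbit l {0, d}) D := by
    intro d hd e he hde
    simp only [hD, Finset.coe_image, Set.mem_image, Finset.mem_coe,
      Finset.mem_Ico] at hd he
    obtain ⟨i, hi, rfl⟩ := hd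
    obtain ⟨j, hj, rfl⟩ := he
    rcases orbit_eq_imp hde with h1 | h1
    · exact h1.symm
    · exfalso
      have : ((i + j : ℕ) : ZMod l) = 0 := by
        rw [Nat.cast_add, h1]; ring
      have := (cast_zero (i + j) (by omega)).mp this
      omega
  have goal1 : norb l 2 l = h - 1 := by
    rw [norb, hbig, Finset.card_image_of_injOn hDinj, hDcard]
  -- the half-orbit count
  have hsmall : ((Finset.univ.filter
      (fun A : Finset (ZMod l) => A.card = 2)).image (shOrbit l)).filter
        (fun O => O.card = h) = {shOrbit l {0, c}} := by
    apply Finset.Subset.antisymm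
    · intro O hO
      rw [Finset.mem_filter] at hO
      obtain ⟨d, hd0, rfl⟩ := orbit_form O hO.1
      by_cases hdd : d + d = 0
      · rw [two_torsion d hd0 hdd]; exact Finset.mem_singleton_self _
      · exfalso
        have := card_shOrbit_big hdd
        rw [hO.2] at this
        omega
    · intro O hO
      rw [Finset.mem_singleton] at hO
      subst hO
      exact Finset.mem_filter.mpr ⟨mem_img c hc0, hhalf⟩
  have goal2 : norb l 2 h = 1 := by
    rw [norb, hsmall, Finset.card_singleton]
  -- minimal period
  have hper : Function.IsPeriodicPt (sh l) h ({0, c} : Finset (ZMod l)) := by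
    show (sh l)^[h] _ = _
    rw [sh_iterate, image_pair, zero_add, ← hc, hcc]
    exact Finset.pair_comm c 0
  have hpos : 0 < Function.minimalPeriod (sh l) ({0, c} : Finset (ZMod l)) :=
    hper.minimalPeriod_pos (by omega)
  have hdvd := hper.minimalPeriod_dvd
  set t := Function.minimalPeriod (sh l) ({0, c} : Finset (ZMod l)) with ht
  have hth : t ≤ h := Nat.le_of_dvd (by omega) hdvd
  have htper : (sh l)^[t] ({0, c} : Finset (ZMod l)) = {0, c} :=
    Function.isPeriodicPt_minimalPeriod (sh l) _
  rw [sh_iterate, image_pair, zero_add] at htper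
  have goal3 : t = h := by
    rcases pair_eq_pair_iff'.mp htper with ⟨h1, _⟩ | ⟨h1, _⟩
    · have := (cast_zero t (by omega)).mp h1
      omega
    · rw [hc] at h1
      have := cast_inj_of_lt (by omega) hhl h1
      omega
  exact ⟨goal1, goal2, goal3⟩
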